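/- Let β ∈ ℝ^D with β ≠ 0, let h_β be the linear classifier, and let a*(·) denote the closed-form optimal action. Fix d° ∈ {1, …, D}. Let X be a random vector in ℝ^D with (β·X)² integrable, and let G be a real-valued random variable of the form G = g((X_d)_{d ≠ d°}) for a measurable function g of the coordinates other than d° (an imputation of the missing feature d°), with (X_{d°} − G)² integrable. Let X̂ be the random vector with X̂_{d°} = G and X̂_d = X_d for d ≠ d°. Then E[‖a*(X̂) − a*(X)‖₂²] ≤ (1/‖β‖₂²) · ( β_{d°}² · E[(X_{d°} − G)²] + E[(β·X)² · 1{h_β(X) ≠ h_β(X̂)}] ). -/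

import Mathlib

open MeasureTheory
open scoped RealInnerProductSpace

noncomputable section

/-- The linear classifier `h_β`. -/
def hbeta {D : ℕ} (β x : EuclideanSpace ℝ (Fin D)) : ℤ :=
  if 0 ≤ ⟪β, x⟫ then 1 else -1

/-- The closed-form optimal action `a*(x)`. -/
def aStar {D : ℕ} (β x : EuclideanSpace ℝ (Fin D)) : EuclideanSpace ℝ (Fin D) :=
  if hbeta β x = -1 then -((⟪β, x⟫ / ‖β‖ ^ 2) • β) else 0

lemma key {D : ℕ} (β x y : EuclideanSpace ℝ (Fin D)) (hβ : β ≠ 0) :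
    ‖aStar β y - aStar β x‖ ^ 2 ≤
      (1 / ‖β‖ ^ 2) * (((⟪β, y⟫ : ℝ) - ⟪β, x⟫) ^ 2 +
        (if hbeta β x ≠ hbeta β y then (⟪β, x⟫ : ℝ) ^ 2 else 0)) := by
  have hb0 : ‖β‖ ≠ 0 := norm_ne_zero_iff.mpr hβ
  have hb : (0:ℝ) < ‖β‖ ^ 2 := by positivity
  have hns : ∀ c : ℝ, ‖c • β‖ ^ 2 = c ^ 2 * ‖β‖ ^ 2 := fun c => by
    rw [norm_smul, mul_pow, Real.norm_eq_abs, sq_abs]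
  have hdiv : ∀ c : ℝ, (c / ‖β‖ ^ 2) ^ 2 * ‖β‖ ^ 2 = c ^ 2 / ‖β‖ ^ 2 := fun c => by
    field_simp
  set s := (⟪β, x⟫ : ℝ) with hsdef
  set t := (⟪β, y⟫ : ℝ) with htdef
  unfold aStar hbeta
  rw [← hsdef, ← htdef]
  by_cases hs : 0 ≤ s <;> by_cases ht : 0 ≤ t <;>
    simp only [hs, ht, if_true, if_false, ite_true, ite_false] <;> norm_num
  · positivity
  · rw [hns, hdiv, inv_mul_eq_div]
    apply div_le_div_of_nonneg_right _ hb.le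
    push_neg at ht
    nlinarith
  · rw [hns, hdiv, inv_mul_eq_div]
    apply div_le_div_of_nonneg_right _ hb.le
    nlinarith
  · have h1 : -((t / ‖β‖ ^ 2) • β) + (s / ‖β‖ ^ 2) • β = ((s - t) / ‖β‖ ^ 2) • β := by
      rw [← neg_smul, ← add_smul]; congr 1; ring
    rw [h1, hns, hdiv, inv_mul_eq_div]
    apply div_le_div_of_nonneg_right _ hb.le
    nlinarith

lemma hbeta_ne_iff {D : ℕ} (β x y : EuclideanSpace ℝ (Fin D)) :
    hbeta β x ≠ hbeta β y ↔ ¬((0 ≤ (⟪β, x⟫ : ℝ)) ↔ (0 ≤ (⟪β, y⟫ : ℝ))) := by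
  unfold hbeta
  by_cases h1 : 0 ≤ (⟪β, x⟫ : ℝ) <;> by_cases h2 : 0 ≤ (⟪β, y⟫ : ℝ) <;>
    simp only [h1, h2, if_true, if_false, ite_true, ite_false]
  · exact iff_of_false (by simp) (by tauto)
  · exact iff_of_true (by decide) (by tauto)
  · exact iff_of_true (by decide) (by tauto)
  · exact iff_of_false (by simp) (by tauto)

/-- General imputation bound:
`E[‖a*(X̂) − a*(X)‖₂²] ≤ (1/‖β‖₂²)(β_{d°}²·E[(X_{d°} − G)²] + E[(β·X)²·1{h_β(X) ≠ h_β(X̂)}])`,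
where `G` is a measurable imputation of the missing coordinate `d°` computed from the
other coordinates of `X`. -/
theorem stmt7 {D : ℕ} (β : EuclideanSpace ℝ (Fin D)) (hβne : β ≠ 0) (d0 : Fin D)
    {Ω : Type*} [MeasurableSpace Ω] (μ : Measure Ω) [IsProbabilityMeasure μ]
    (X : Ω → EuclideanSpace ℝ (Fin D)) (hX : Measurable X)
    (hXβ : Integrable (fun ω => (⟪β, X ω⟫ : ℝ) ^ 2) μ)
    (G : Ω → ℝ)
    (hGform : ∃ g : ({d : Fin D // d ≠ d0} → ℝ) → ℝ,
      Measurable g ∧ ∀ ω, G ω = g fun d => X ω d.1)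
    (hG2 : Integrable (fun ω => (X ω d0 - G ω) ^ 2) μ)
    (Xhat : Ω → EuclideanSpace ℝ (Fin D))
    (hXhat : ∀ ω d, Xhat ω d = if d = d0 then G ω else X ω d) :
    ∫ ω, ‖aStar β (Xhat ω) - aStar β (X ω)‖ ^ 2 ∂μ ≤
      (1 / ‖β‖ ^ 2) *
        (β d0 ^ 2 * (∫ ω, (X ω d0 - G ω) ^ 2 ∂μ) +
          ∫ ω, (if hbeta β (X ω) ≠ hbeta β (Xhat ω) then (⟪β, X ω⟫ : ℝ) ^ 2 else 0) ∂μ) := by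
  -- coordinates of X are measurable
  have hXd : ∀ d, Measurable (fun ω => X ω d) := fun d =>
    (measurable_pi_apply d).comp ((WithLp.measurable_ofLp _ _).comp hX)
  -- G is measurable
  have hG : Measurable G := by
    obtain ⟨g, hg, hGg⟩ := hGform
    have hcomp : Measurable fun ω => g fun d : {d : Fin D // d ≠ d0} => X ω d.1 :=
      hg.comp (measurable_pi_lambda _ fun d => hXd d.1)
    have hGeq : G = fun ω => g fun d : {d : Fin D // d ≠ d0} => X ω d.1 := funext hGg
    rw [hGeq]; exact hcomp
  -- the inner product difference
  have hker : ∀ ω, (⟪β, Xhat ω⟫ : ℝ) - ⟪β, X ω⟫ = β d0 * (G ω - X ω d0) := by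
    intro ω
    simp only [PiLp.inner_apply, RCLike.inner_apply, conj_trivial]
    rw [← Finset.sum_sub_distrib]
    rw [Finset.sum_eq_single d0]
    · simp [hXhat]; ring
    · intro d _ hd
      simp [hXhat, hd]
    · intro h; exact absurd (Finset.mem_univ d0) h
  -- inner products are measurable
  have hsX : Measurable fun ω => (⟪β, X ω⟫ : ℝ) := by
    simp only [PiLp.inner_apply, RCLike.inner_apply, conj_trivial]
    exact Finset.measurable_sum _ fun d _ => (hXd d).mul_const _
  have hsXhat : Measurable fun ω => (⟪β, Xhat ω⟫ : ℝ) := by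
    simp only [PiLp.inner_apply, RCLike.inner_apply, conj_trivial]
    refine Finset.measurable_sum _ fun d _ => ?_
    have hm : Measurable fun ω => Xhat ω d := by
      have heq : (fun ω => Xhat ω d) = fun ω => if d = d0 then G ω else X ω d :=
        funext fun ω => hXhat ω d
      rw [heq]; split_ifs; exacts [hG, hXd d]
    exact hm.mul_const _
  -- the "classifiers differ" set is measurable
  have hA : MeasurableSet {ω | hbeta β (X ω) ≠ hbeta β (Xhat ω)} := by
    have h1 : {ω | hbeta β (X ω) ≠ hbeta β (Xhat ω)} =
        ({ω | 0 ≤ (⟪β, X ω⟫ : ℝ)} \ {ω | 0 ≤ (⟪β, Xhat ω⟫ : ℝ)}) ∪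
        ({ω | 0 ≤ (⟪β, Xhat ω⟫ : ℝ)} \ {ω | 0 ≤ (⟪β, X ω⟫ : ℝ)}) := by
      ext ω
      rw [Set.mem_setOf_eq, hbeta_ne_iff]
      simp only [Set.mem_union, Set.mem_diff, Set.mem_setOf_eq]
      tauto
    rw [h1]
    have m1 : MeasurableSet {ω | 0 ≤ (⟪β, X ω⟫ : ℝ)} := measurableSet_le measurable_const hsX
    have m2 : MeasurableSet {ω | 0 ≤ (⟪β, Xhat ω⟫ : ℝ)} := measurableSet_le measurable_const hsXhat
    exact (m1.diff m2).union (m2.diff m1)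
  -- integrability of indicator term
  have hindeq : (fun ω => if hbeta β (X ω) ≠ hbeta β (Xhat ω) then (⟪β, X ω⟫ : ℝ) ^ 2 else 0)
      = Set.indicator {ω | hbeta β (X ω) ≠ hbeta β (Xhat ω)} (fun ω => (⟪β, X ω⟫ : ℝ) ^ 2) := by
    ext ω; rw [Set.indicator_apply]; rfl
  have hind : Integrable
      (fun ω => if hbeta β (X ω) ≠ hbeta β (Xhat ω) then (⟪β, X ω⟫ : ℝ) ^ 2 else 0) μ := by
    rw [hindeq]; exact hXβ.indicator hA
  -- integrability of first term
  have hfirst : Integrable (fun ω => β d0 ^ 2 * (X ω d0 - G ω) ^ 2) μ := hG2.const_mul _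
  -- pointwise bound and conclude
  have hmono := integral_mono_of_nonneg (f := fun ω => ‖aStar β (Xhat ω) - aStar β (X ω)‖ ^ 2)
    (g := fun ω => (1 / ‖β‖ ^ 2) * (β d0 ^ 2 * (X ω d0 - G ω) ^ 2 +
      (if hbeta β (X ω) ≠ hbeta β (Xhat ω) then (⟪β, X ω⟫ : ℝ) ^ 2 else 0)))
    (Filter.Eventually.of_forall fun ω => by positivity)
    (((hfirst.add hind).const_mul _))
    (Filter.Eventually.of_forall fun ω => by
      have h := key β (X ω) (Xhat ω) hβne
      have h2 : ((⟪β, Xhat ω⟫ : ℝ) - ⟪β, X ω⟫) ^ 2 = β d0 ^ 2 * (X ω d0 - G ω) ^ 2 := by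
        rw [hker ω]; ring
      rw [h2] at h
      exact h)
  refine hmono.trans_eq ?_
  rw [integral_const_mul, integral_add hfirst hind, integral_const_mul]

end
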